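/- If U ∈ E satisfies a Gaussian bound |U(z)| ≤ C₀e^{-c₀|z|²} with 0 < c₀ ≤ 1/2, then for every c₁ < c₀/(1+2c₀) there exists C₁ > 0 such that |(∂_z - z̄/2)U(z)| ≤ C₁ e^{-c₁|z|²} for all z ∈ ℂ, where U is viewed via the reproducing formula U(z) = (1/π)e^{-|z|²/2}∫_ℂ e^{w̄z - |w|²/2}U(w)dL(w). -/

import Mathlib

open MeasureTheory Complex

-- Gaussian integrability on ℂ
lemma aux_gauss_int (b : ℝ) (hb : 0 < b) :
    Integrable (fun v : ℂ => Real.exp (-b * ‖v‖ ^ 2)) := by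
  have h := GaussianFourier.integrable_cexp_neg_mul_sq_norm_add (V := ℂ) (b := (b : ℂ)) (by simpa using hb) 0 0
  have h2 := h.norm
  have : ∀ a : ℂ, (((‖a‖ : ℂ)) ^ 2).re = ‖a‖ ^ 2 := by
    intro a
    rw [show ((‖a‖ : ℂ)) ^ 2 = ((‖a‖ ^ 2 : ℝ) : ℂ) by push_cast; ring, Complex.ofReal_re]
  simpa [Complex.norm_exp, this] using h2

lemma aux_lin (b t : ℝ) (hb : 0 < b) (ht : 0 ≤ t) :
    t * Real.exp (-b * t ^ 2) ≤ (1 + 4 / b) * Real.exp (-(b / 2) * t ^ 2) := by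
  have h2 : Real.exp (-b * t ^ 2) = Real.exp (-(b/2) * t^2) * Real.exp (-(b/2) * t^2) := by
    rw [← Real.exp_add]; ring_nf
  rw [h2, ← mul_assoc]
  have hpos : (0:ℝ) < Real.exp (-(b/2)*t^2) := Real.exp_pos _
  have key := Real.add_one_le_exp ((b/2)*t^2)
  have hx : Real.exp (-(b/2)*t^2) * Real.exp ((b/2)*t^2) = 1 := by
    rw [← Real.exp_add]; ring_nf; exact Real.exp_zero
  have hmain : t * Real.exp (-(b/2)*t^2) ≤ 1 + 4/b := by
    have h4 : (0:ℝ) < 4/b := by positivity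
    have hexp : (0:ℝ) < Real.exp ((b/2)*t^2) := Real.exp_pos _
    rw [show Real.exp (-(b/2)*t^2) = (Real.exp ((b/2)*t^2))⁻¹ by
      rw [← Real.exp_neg]; ring_nf]
    rw [mul_inv_le_iff₀ hexp]
    have hfb : (4/b) * ((b/2)*t^2) = 2*t^2 := by field_simp; ring
    nlinarith [sq_nonneg (t - 1), Real.exp_pos ((b/2)*t^2)]
  calc t * Real.exp (-(b/2)*t^2) * Real.exp (-(b/2)*t^2)
      ≤ (1 + 4/b) * Real.exp (-(b/2)*t^2) := by
        apply mul_le_mul_of_nonneg_right hmain hpos.le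

lemma aux_int (b : ℝ) (hb : 0 < b) :
    Integrable (fun v : ℂ => ‖v‖ * Real.exp (-b * ‖v‖ ^ 2)) := by
  have hg := ((aux_gauss_int (b/2) (by linarith)).const_mul (1 + 4/b))
  refine hg.mono ?_ (Filter.Eventually.of_forall fun v => ?_)
  · exact (continuous_norm.mul
      (Real.continuous_exp.comp ((continuous_const.mul
        (continuous_norm.pow 2))))).aestronglyMeasurable
  · have h1 := aux_lin b (‖v‖) hb (norm_nonneg v)
    have h2 : (0:ℝ) ≤ 1 + 4/b := by positivity
    simp only [Real.norm_eq_abs]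
    rw [_root_.abs_of_nonneg (show (0:ℝ) ≤ ‖v‖ * Real.exp (-b * ‖v‖ ^ 2) by positivity),
      _root_.abs_of_nonneg (show (0:ℝ) ≤ (1 + 4 / b) * Real.exp (-(b / 2) * ‖v‖ ^ 2) by positivity)]
    exact h1

lemma aux_quad (c₀ c₁ a b c : ℝ) (hc₀ : 0 < c₀) (hc₁ : 0 ≤ c₁)
    (hkey : c₁ * (1 + 2*c₀) ≤ c₀) (ha : 0 ≤ a) (hb : 0 ≤ b) (hc : 0 ≤ c)
    (htri : c ≤ a + b) :
    (1/2 - c₁ * (2*c₀+1)/(2*c₀)) * a^2 + c₁ * c^2 ≤ a^2/2 + c₀ * b^2 := by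
  have h2c₀ : (0:ℝ) < 2*c₀ := by linarith
  have hd2 : c₁ * (2*c₀+1)/(2*c₀) * (2*c₀) * a^2 = c₁*(2*c₀+1)*a^2 := by
    field_simp
  have hsq : c^2 ≤ (a+b)^2 := by nlinarith
  have f1 : 2*c₀*c₁*c^2 ≤ 2*c₀*c₁*(a+b)^2 :=
    mul_le_mul_of_nonneg_left hsq (by positivity)
  have f2 : 4*c₀*c₁*(a*b) ≤ c₁*a^2 + 4*c₀^2*c₁*b^2 := by
    nlinarith [mul_le_mul_of_nonneg_left (sq_nonneg (a - 2*c₀*b)) hc₁]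
  have f3 : 2*c₀*(c₁*(1+2*c₀))*b^2 ≤ 2*c₀*c₀*b^2 := by
    apply mul_le_mul_of_nonneg_right _ (sq_nonneg b)
    exact mul_le_mul_of_nonneg_left hkey h2c₀.le
  -- conclusion: 2c₀c₁c² ≤ 2c₀ D a² + 2c₀c₀b², then divide
  have hsum : 2*c₀*(c₁*c^2) ≤ 2*c₀*((c₁ * (2*c₀+1)/(2*c₀))*a^2 + c₀*b^2) := by
    nlinarith [f1, f2, f3, hd2]
  have := le_of_mul_le_mul_left hsum h2c₀
  linarith

theorem stmt17 (U : ℂ → ℂ) (hUm : Measurable U) (C₀ c₀ c₁ : ℝ)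
    (hC₀ : 0 < C₀) (hc₀ : 0 < c₀) (hc₀' : c₀ ≤ 1 / 2)
    (hU : ∀ z : ℂ, ‖U z‖ ≤ C₀ * Real.exp (-c₀ * ‖z‖ ^ 2))
    (hc₁ : 0 < c₁) (hc₁' : c₁ < c₀ / (1 + 2 * c₀)) :
    ∃ C₁ > 0, ∀ z : ℂ,
      ‖((Real.exp (-(‖z‖) ^ 2 / 2) / Real.pi : ℝ) *
          ∫ w : ℂ, ((starRingEnd ℂ) w - (starRingEnd ℂ) z) *
            Complex.exp ((starRingEnd ℂ) w * z - ((‖w‖ : ℂ)) ^ 2 / 2) * U w)‖ ≤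
        C₁ * Real.exp (-c₁ * ‖z‖ ^ 2) := by
  have hkey : c₁ * (1 + 2 * c₀) < c₀ := (lt_div_iff₀ (by linarith)).mp hc₁'
  set ε : ℝ := 1/2 - c₁ * (2*c₀+1)/(2*c₀) with hεdef
  have h2c₀ : (0:ℝ) < 2*c₀ := by linarith
  have hε : 0 < ε := by
    have hlt : c₁ * (2*c₀+1) / (2*c₀) < 1/2 := by
      rw [div_lt_iff₀ h2c₀]; linarith
    rw [hεdef]; linarith
  have hInt : Integrable (fun v : ℂ => ‖v‖ * Real.exp (-ε * ‖v‖ ^ 2)) :=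
    aux_int ε hε
  set I : ℝ := ∫ v : ℂ, ‖v‖ * Real.exp (-ε * ‖v‖ ^ 2) with hIdef
  have hI0 : 0 ≤ I := integral_nonneg fun v => by positivity
  refine ⟨C₀ * (I + 1) / Real.pi, by positivity, fun z => ?_⟩
  set K : ℝ := Real.exp (‖z‖ ^ 2 / 2 - c₁ * ‖z‖ ^ 2) with hKdef
  set g : ℂ → ℝ := fun w =>
    C₀ * (‖w - z‖ * Real.exp (-ε * ‖w - z‖ ^ 2)) * K with hgdef
  have hg_int : Integrable g := ((hInt.comp_sub_right z).const_mul C₀).mul_const K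
  have hbound : ∀ w : ℂ,
      ‖((starRingEnd ℂ) w - (starRingEnd ℂ) z) *
        Complex.exp ((starRingEnd ℂ) w * z - ((‖w‖ : ℂ)) ^ 2 / 2) * U w‖ ≤ g w := by
    intro w
    have hre : ((starRingEnd ℂ) w * z - ((‖w‖ : ℂ)) ^ 2 / 2).re =
        ((starRingEnd ℂ) w * z).re - ‖w‖ ^ 2 / 2 := by
      have h : ((‖w‖ : ℂ)) ^ 2 / 2 = ((‖w‖ ^ 2 / 2 : ℝ) : ℂ) := by
        push_cast; ring
      rw [Complex.sub_re, h, Complex.ofReal_re]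
    have e1 : (starRingEnd ℂ) w - (starRingEnd ℂ) z = (starRingEnd ℂ) (w - z) :=
      (map_sub _ _ _).symm
    rw [norm_mul, norm_mul, e1,
      Complex.norm_conj, Complex.norm_exp, hre]
    -- identity and triangle inequality
    have hid : ‖w - z‖ ^ 2 =
        ‖w‖ ^ 2 - 2 * ((starRingEnd ℂ) w * z).re + ‖z‖ ^ 2 := by
      simp only [Complex.sq_norm, Complex.normSq_apply, Complex.mul_re, Complex.conj_re,
        Complex.conj_im, Complex.sub_re, Complex.sub_im]
      ring
    have htri : ‖z‖ ≤ ‖w - z‖ + ‖w‖ := by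
      have h := norm_sub_le (w - z) w
      simp only [sub_sub_cancel_left, norm_neg] at h
      exact h
    have hquad := aux_quad c₀ c₁ (‖w - z‖) (‖w‖) (‖z‖)
      hc₀ hc₁.le hkey.le (norm_nonneg _) (norm_nonneg _) (norm_nonneg _) htri
    have hexp : ((starRingEnd ℂ) w * z).re - ‖w‖ ^ 2 / 2 - c₀ * ‖w‖ ^ 2 ≤
        -ε * ‖w - z‖ ^ 2 - c₁ * ‖z‖ ^ 2 + ‖z‖ ^ 2 / 2 := by
      rw [hεdef]; linarith
    calc ‖w - z‖ *
          Real.exp (((starRingEnd ℂ) w * z).re - ‖w‖ ^ 2 / 2) * ‖U w‖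
        ≤ ‖w - z‖ *
          Real.exp (((starRingEnd ℂ) w * z).re - ‖w‖ ^ 2 / 2) *
          (C₀ * Real.exp (-c₀ * ‖w‖ ^ 2)) := by
          apply mul_le_mul_of_nonneg_left (hU w) (by positivity)
      _ = C₀ * ‖w - z‖ *
          Real.exp (((starRingEnd ℂ) w * z).re - ‖w‖ ^ 2 / 2 - c₀ * ‖w‖ ^ 2) := by
          rw [show ((starRingEnd ℂ) w * z).re - ‖w‖ ^ 2 / 2 - c₀ * ‖w‖ ^ 2 =
            (((starRingEnd ℂ) w * z).re - ‖w‖ ^ 2 / 2) + (-c₀ * ‖w‖ ^ 2) from by ring,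
            Real.exp_add]
          ring
      _ ≤ C₀ * ‖w - z‖ *
          Real.exp (-ε * ‖w - z‖ ^ 2 - c₁ * ‖z‖ ^ 2 + ‖z‖ ^ 2 / 2) := by
          apply mul_le_mul_of_nonneg_left (Real.exp_le_exp.mpr hexp) (by positivity)
      _ = g w := by
          rw [hgdef, hKdef]
          simp only
          rw [show -ε * ‖w - z‖ ^ 2 - c₁ * ‖z‖ ^ 2 + ‖z‖ ^ 2 / 2 =
            (-ε * ‖w - z‖ ^ 2) + (‖z‖ ^ 2 / 2 - c₁ * ‖z‖ ^ 2) from by ring,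
            Real.exp_add]
          ring
  have hIg : (∫ w : ℂ, g w) = C₀ * I * K := by
    rw [hgdef]
    simp only
    rw [integral_mul_const, integral_const_mul]
    congr 2
    exact integral_sub_right_eq_self (fun v : ℂ => ‖v‖ * Real.exp (-ε * ‖v‖ ^ 2)) z
  have hpre : (0:ℝ) ≤ Real.exp (-(‖z‖) ^ 2 / 2) / Real.pi := by positivity
  calc ‖(Real.exp (-(‖z‖) ^ 2 / 2) / Real.pi : ℝ) *
          ∫ w : ℂ, ((starRingEnd ℂ) w - (starRingEnd ℂ) z) *
            Complex.exp ((starRingEnd ℂ) w * z - ((‖w‖ : ℂ)) ^ 2 / 2) * U w‖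
      = (Real.exp (-(‖z‖) ^ 2 / 2) / Real.pi) *
          ‖∫ w : ℂ, ((starRingEnd ℂ) w - (starRingEnd ℂ) z) *
            Complex.exp ((starRingEnd ℂ) w * z - ((‖w‖ : ℂ)) ^ 2 / 2) * U w‖ := by
        rw [norm_mul, Complex.norm_real, Real.norm_of_nonneg hpre]
    _ ≤ (Real.exp (-(‖z‖) ^ 2 / 2) / Real.pi) * ∫ w : ℂ, g w := by
        apply mul_le_mul_of_nonneg_left _ hpre
        exact norm_integral_le_of_norm_le hg_int (Filter.Eventually.of_forall hbound)
    _ = (Real.exp (-(‖z‖) ^ 2 / 2) / Real.pi) * (C₀ * I * K) := by rw [hIg]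
    _ = C₀ * I / Real.pi * Real.exp (-c₁ * ‖z‖ ^ 2) := by
        have hE : Real.exp (-‖z‖ ^ 2 / 2) * K = Real.exp (-c₁ * ‖z‖ ^ 2) := by
          rw [hKdef, ← Real.exp_add]; congr 1; ring
        rw [show Real.exp (-‖z‖ ^ 2 / 2) / Real.pi * (C₀ * I * K) =
          C₀ * I / Real.pi * (Real.exp (-‖z‖ ^ 2 / 2) * K) from by ring, hE]
    _ ≤ C₀ * (I + 1) / Real.pi * Real.exp (-c₁ * ‖z‖ ^ 2) := by
        apply mul_le_mul_of_nonneg_right _ (Real.exp_pos _).le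
        gcongr
        linarith
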